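/- Let Q be a finite quiver without multiple arrows and let Q^s be its separated quiver. If for every connected component Δ of Q^s the associated quadratic form q_Δ(x) = 4∑_{j sinks} x_j² − ∑_{i sources}(∑_j a_{ij}x_j)² is positive semidefinite, then the spectral radius of Q is at most 2. If moreover each q_Δ is positive definite, then the spectral radius of Q is strictly less than 2. -/

import Mathlib

/-- The spectral radius of a square complex matrix. -/
noncomputable def specRad {m : Type*} [Fintype m] [DecidableEq m]
    (M : Matrix m m ℂ) : ℝ :=
  sSup {r : ℝ | ∃ μ ∈ spectrum ℂ M, r = ‖μ‖}

open Finset in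
lemma key_eig {n : ℕ} (a : Matrix (Fin n) (Fin n) ℕ) {μ : ℂ}
    (hμ : μ ∈ spectrum ℂ (a.map (Nat.cast : ℕ → ℂ))) :
    ∃ x : Fin n → ℝ, x ≠ 0 ∧
      ‖μ‖ ^ 2 * ∑ i, x i ^ 2 ≤ ∑ i, (∑ j, (a i j : ℝ) * x j) ^ 2 := by
  rw [spectrum.mem_iff] at hμ
  have hdet : (μ • (1 : Matrix (Fin n) (Fin n) ℂ) - a.map Nat.cast).det = 0 := by
    by_contra h
    exact hμ (by simpa [Matrix.isUnit_iff_isUnit_det, Algebra.algebraMap_eq_smul_one,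
      isUnit_iff_ne_zero] using h)
  obtain ⟨v, hv0, hv⟩ := (Matrix.exists_mulVec_eq_zero_iff).mpr hdet
  have heig : ∀ i, ∑ j, (a i j : ℂ) * v j = μ * v i := by
    intro i
    have := congrFun hv i
    simp only [Matrix.mulVec, dotProduct, Pi.zero_apply, Matrix.sub_apply,
      Matrix.smul_apply, Matrix.map_apply, sub_mul, Finset.sum_sub_distrib] at this
    have h1 : ∑ x, μ • (1:Matrix (Fin n) (Fin n) ℂ) i x * v x = μ * v i := by
      simp [Matrix.one_apply, smul_eq_mul, mul_ite, ite_mul, Finset.sum_ite_eq, Finset.mem_univ]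
    rw [h1] at this
    linear_combination -this
  refine ⟨fun j => ‖v j‖, ?_, ?_⟩
  · intro h
    apply hv0
    funext j
    have := congrFun h j
    simpa using this
  · rw [Finset.mul_sum]
    apply Finset.sum_le_sum
    intro i _
    have h1 : ‖μ‖ * ‖v i‖ = ‖∑ j, (a i j : ℂ) * v j‖ := by
      rw [heig i, norm_mul]
    have h2 : ‖∑ j, (a i j : ℂ) * v j‖ ≤ ∑ j, (a i j : ℝ) * ‖v j‖ := by
      refine (norm_sum_le _ _).trans ?_
      apply le_of_eq
      congr 1; funext j
      simp [norm_mul]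
    have h3 : 0 ≤ ‖μ‖ * ‖v i‖ := by positivity
    calc ‖μ‖ ^ 2 * ‖v i‖ ^ 2
        = (‖μ‖ * ‖v i‖) ^ 2 := by ring
      _ ≤ (∑ j, (a i j : ℝ) * ‖v j‖) ^ 2 := by
          apply pow_le_pow_left₀ h3 (h1 ▸ h2)

open Finset in
/-- Let `Q` be a finite quiver without multiple arrows, with arrow-count matrix
`a` (so `a i j ≤ 1`).  The separated quiver `Q^s` is bipartite with sources `i⁺` and
sinks `j⁻`, and one arrow `i⁺ → j⁻` for each arrow `i → j` of `Q`; its associated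
quadratic form on vectors indexed by the sinks (i.e. by `Q_0`) is
`q(x) = 4 ∑_j x_j² − ∑_i (∑_j a_{ij} x_j)²`, the orthogonal sum of the forms `q_Δ` of
the connected components `Δ` of `Q^s`.  If `q` is positive semidefinite (equivalently,
each `q_Δ` is), then the spectral radius of `Q` is at most `2`; if moreover `q` is
positive definite (equivalently, each `q_Δ` is), then the spectral radius of `Q` is
strictly less than `2`. -/
theorem stmt_12 {n : ℕ} (a : Matrix (Fin n) (Fin n) ℕ)
    (hsimple : ∀ i j, a i j ≤ 1)
    (hpsd : ∀ x : Fin n → ℝ,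
      0 ≤ 4 * ∑ j, x j ^ 2 - ∑ i, (∑ j, (a i j : ℝ) * x j) ^ 2) :
    specRad (a.map (Nat.cast : ℕ → ℂ)) ≤ 2 ∧
      ((∀ x : Fin n → ℝ, x ≠ 0 →
          0 < 4 * ∑ j, x j ^ 2 - ∑ i, (∑ j, (a i j : ℝ) * x j) ^ 2) →
        specRad (a.map (Nat.cast : ℕ → ℂ)) < 2) := by
  have hsumpos : ∀ x : Fin n → ℝ, x ≠ 0 → 0 < ∑ i, x i ^ 2 := by
    intro x hx
    obtain ⟨j, hj⟩ := Function.ne_iff.mp hx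
    replace hj : x j ≠ 0 := by simpa using hj
    have h1 : 0 < x j ^ 2 := by positivity
    have h2 : x j ^ 2 ≤ ∑ i, x i ^ 2 :=
      Finset.single_le_sum (fun i _ => sq_nonneg (x i)) (Finset.mem_univ j)
    linarith
  have hbound : ∀ μ ∈ spectrum ℂ (a.map (Nat.cast : ℕ → ℂ)), ‖μ‖ ≤ 2 := by
    intro μ hμ
    obtain ⟨x, hx0, hle⟩ := key_eig a hμ
    have hS := hsumpos x hx0
    have h4 := hpsd x
    have hsq : ‖μ‖ ^ 2 ≤ 4 := by
      nlinarith
    nlinarith [norm_nonneg μ]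
  have hboundlt : (∀ x : Fin n → ℝ, x ≠ 0 →
        0 < 4 * ∑ j, x j ^ 2 - ∑ i, (∑ j, (a i j : ℝ) * x j) ^ 2) →
      ∀ μ ∈ spectrum ℂ (a.map (Nat.cast : ℕ → ℂ)), ‖μ‖ < 2 := by
    intro hpd μ hμ
    obtain ⟨x, hx0, hle⟩ := key_eig a hμ
    have hS := hsumpos x hx0
    have h4 := hpd x hx0
    have hsq : ‖μ‖ ^ 2 < 4 := by
      nlinarith
    nlinarith [norm_nonneg μ]
  constructor
  · apply Real.sSup_le
    · rintro r ⟨μ, hμ, rfl⟩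
      exact hbound μ hμ
    · norm_num
  · intro hpd
    unfold specRad
    set S : Set ℝ := {r : ℝ | ∃ μ ∈ spectrum ℂ (a.map (Nat.cast : ℕ → ℂ)),
      r = ‖μ‖} with hSdef
    have hfin : S.Finite := by
      have : S = (‖·‖) '' (spectrum ℂ (a.map (Nat.cast : ℕ → ℂ))) := by
        ext r
        simp [hSdef, eq_comm, Set.mem_image]
      rw [this]
      exact (Matrix.finite_spectrum _).image _
    rcases Set.eq_empty_or_nonempty S with hS | hS
    · rw [hS, Real.sSup_empty]; norm_num
    · obtain ⟨μ, hμ, heq⟩ := hS.csSup_mem hfin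
      rw [heq]
      exact hboundlt hpd μ hμ
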